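/- arXiv:2008.01518 — 5 statements merged into one kernel-verified Lean document; each statement's English description precedes it below -/
import Mathlib

section
/- On the normal bundle TM⊥ of a semi-invariant submanifold M, the operator C (the normal part of G restricted to normal vectors) defines an f-structure; that is, C³ + C = 0. -/
/-!
Algebraic model of a normal complex contact metric manifold `M̄` together with a
submanifold `M` tangent to the vertical vector fields `U` and `V`.

`F` plays the role of the commutative ring of smooth functions on `M̄` and `X`
the `F`-module of smooth vector fields on `M̄`.
-/

/-- A normal complex contact metric manifold `M̄` (of real dimension `4m+2`),
modeled algebraically: `g` is the Hermitian metric, `J` the complex structure,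
`G`, `H = GJ` the structure tensors, `U`, `V = -JU` the vertical vector fields
with dual 1-forms `u`, `v`, `σ K = g (∇̄_K U) V`, `nabla` the Levi-Civita
connection `∇̄` of `g`, `act` the derivative of functions along vector fields,
and `lie` the Lie bracket.  Korkmaz normality is recorded through the formulas
`∇̄_K U = -GK + σ(K)V` and `∇̄_K V = -HK - σ(K)U`. -/
structure NCCMM (F : Type*) (X : Type*) [CommRing F] [AddCommGroup X] [Module F X] where
  g : X →ₗ[F] X →ₗ[F] F
  J : X →ₗ[F] X
  G : X →ₗ[F] X
  H : X →ₗ[F] X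
  U : X
  V : X
  u : X →ₗ[F] F
  v : X →ₗ[F] F
  σ : X →ₗ[F] F
  nabla : X → X → X
  act : X → F → F
  lie : X → X → X
  g_symm : ∀ K L, g K L = g L K
  g_hermitian : ∀ K L, g (J K) (J L) = g K L
  H_eq : ∀ K, H K = G (J K)
  V_eq : V = - J U
  J_sq : ∀ K, J (J K) = - K
  G_sq : ∀ K, G (G K) = - K + u K • U + v K • V
  H_sq : ∀ K, H (H K) = - K + u K • U + v K • V
  GJ_anti : ∀ K, G (J K) = - J (G K)
  G_U : G U = 0
  g_G_skew : ∀ K L, g (G K) L = - g K (G L)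
  u_eq : ∀ K, u K = g K U
  v_eq : ∀ K, v K = g K V
  nabla_add₁ : ∀ K K' L, nabla (K + K') L = nabla K L + nabla K' L
  nabla_add₂ : ∀ K L L', nabla K (L + L') = nabla K L + nabla K L'
  nabla_smul₁ : ∀ (a : F) (K L : X), nabla (a • K) L = a • nabla K L
  metric_compat : ∀ K L Z, act K (g L Z) = g (nabla K L) Z + g L (nabla K Z)
  torsion_free : ∀ K L, nabla K L - nabla L K = lie K L
  σ_eq : ∀ K, σ K = g (nabla K U) V
  nabla_U : ∀ K, nabla K U = - G K + σ K • V
  nabla_V : ∀ K, nabla K V = - H K - σ K • U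

/-- A submanifold `M` of `M̄` tangent to `U` and `V`, described by the
orthogonal projections `tp` (tangential part) and `np` (normal part) of the
ambient vector fields; vector fields tangent to `M` are those with `tp K = K`
and vector fields normal to `M` are those with `np N = N`. -/
structure SubmanifoldData (F : Type*) (X : Type*) [CommRing F] [AddCommGroup X]
    [Module F X] (A : NCCMM F X) where
  tp : X →ₗ[F] X
  np : X →ₗ[F] X
  tp_add_np : ∀ K, tp K + np K = K
  tp_tp : ∀ K, tp (tp K) = tp K
  np_np : ∀ K, np (np K) = np K
  np_tp : ∀ K, np (tp K) = 0
  tp_np : ∀ K, tp (np K) = 0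
  g_tp_np : ∀ K L, A.g (tp K) (np L) = 0
  U_tang : tp A.U = A.U
  V_tang : tp A.V = A.V
  lie_tang : ∀ K L, tp K = K → tp L = L → tp (A.lie K L) = A.lie K L

namespace SubmanifoldData

variable {F X : Type*} [CommRing F] [AddCommGroup X] [Module F X]
variable {A : NCCMM F X} (S : SubmanifoldData F X A)

/-- The induced connection `∇` on `M` (Gauss formula `∇̄_K L = ∇_K L + h(K,L)`). -/
def conn (K L : X) : X := S.tp (A.nabla K L)

/-- The second fundamental form `h` of `M`. -/
def sff (K L : X) : X := S.np (A.nabla K L)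

/-- The shape operator `A_N` (Weingarten formula `∇̄_K N = -A_N K + ∇⊥_K N`). -/
def shape (N K : X) : X := - S.tp (A.nabla K N)

/-- The normal connection `∇⊥`. -/
def nconn (K N : X) : X := S.np (A.nabla K N)

/-- `P K`: the tangential part of `G K`, so that `G K = P K + Q K`. -/
def P (K : X) : X := S.tp (A.G K)

/-- `Q K`: the normal part of `G K`, so that `G K = P K + Q K`. -/
def Q (K : X) : X := S.np (A.G K)

/-- `B N`: the tangential part of `G N` for normal `N`, so `G N = B N + C N`. -/
def B (N : X) : X := S.tp (A.G N)

/-- `C N`: the normal part of `G N` for normal `N`, so `G N = B N + C N`. -/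
def C (N : X) : X := S.np (A.G N)

/-- `K` belongs to `sp{U,V}⊥ ⊂ TM`: it is tangent to `M` and orthogonal to `U`, `V`. -/
def Hor (K : X) : Prop := S.tp K = K ∧ A.g K A.U = 0 ∧ A.g K A.V = 0

/-- The (invariant) distribution `D = {K ∈ sp{U,V}⊥ : Q K = 0}`. -/
def Dinv (K : X) : Prop := S.Hor K ∧ S.Q K = 0

/-- The (anti-invariant) distribution `D⊥ = {K ∈ sp{U,V}⊥ : P K = 0}`. -/
def Danti (K : X) : Prop := S.Hor K ∧ S.P K = 0

/-- `M` is a semi-invariant submanifold: `TM = D ⊕ D⊥ ⊕ sp{U,V}`, the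
distribution `D` is invariant under `G` and `H`, and `G`, `H` map `D⊥`
into the normal bundle `TM⊥`. -/
def SemiInvariant : Prop :=
  (∀ K, S.tp K = K → ∃ (K₁ K₂ : X) (a b : F), S.Dinv K₁ ∧ S.Danti K₂ ∧
      K = K₁ + K₂ + a • A.U + b • A.V) ∧
  ((A.G : X → X) '' {K | S.Dinv K} = {K | S.Dinv K}) ∧
  ((A.H : X → X) '' {K | S.Dinv K} = {K | S.Dinv K}) ∧
  (∀ K, S.Danti K → S.np (A.G K) = A.G K ∧ S.np (A.H K) = A.H K)

/-- `M` is totally umbilical: `h(K,L) = g(K,L) μ` for all tangent `K`, `L`,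
where `μ` is the mean curvature (normal) vector field. -/
def TotallyUmbilical : Prop :=
  ∃ μ : X, S.np μ = μ ∧
    ∀ K L : X, S.tp K = K → S.tp L = L → S.sff K L = A.g K L • μ

end SubmanifoldData


section

variable {F X : Type*} [CommRing F] [AddCommGroup X] [Module F X]

/-- on the normal bundle of a semi-invariant submanifold `M`,
the operator `C` (normal part of `G` on normal fields) is an `f`-structure:
`C³ + C = 0`. -/
theorem statement4 (A : NCCMM F X) (S : SubmanifoldData F X A)
    (hSI : S.SemiInvariant) :
    ∀ N : X, S.np N = N → S.C (S.C (S.C N)) + S.C N = 0 := by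
  obtain ⟨hdec, hGD, _hHD, hanti⟩ := hSI
  have hGV : A.G A.V = 0 := by
    rw [A.V_eq, map_neg, A.GJ_anti, A.G_U, map_zero, neg_zero, neg_zero]
  intro N hN
  -- u N = 0 and v N = 0
  have huN : A.u N = 0 := by
    rw [A.u_eq, A.g_symm, ← hN, ← S.U_tang, S.g_tp_np]
  have hvN : A.v N = 0 := by
    rw [A.v_eq, A.g_symm, ← hN, ← S.V_tang, S.g_tp_np]
  have hG2N : A.G (A.G N) = -N := by
    rw [A.G_sq, huN, hvN, zero_smul, zero_smul, add_zero, add_zero]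
  -- decompose the tangential part of G N
  obtain ⟨K₁, K₂, a, b, hK₁, hK₂, hB⟩ := hdec (S.tp (A.G N)) (S.tp_tp _)
  have hGK₁ : S.Dinv (A.G K₁) := by
    have : A.G K₁ ∈ ⇑A.G '' {K | S.Dinv K} := ⟨K₁, hK₁, rfl⟩
    rwa [hGD] at this
  have hnpGK₁ : S.np (A.G K₁) = 0 := by
    rw [← hGK₁.1.1, S.np_tp]
  have hnpGK₂ : S.np (A.G K₂) = A.G K₂ := (hanti K₂ hK₂).1
  -- G (tp (G N)) = G K₁ + G K₂
  have hGtp : A.G (S.tp (A.G N)) = A.G K₁ + A.G K₂ := by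
    rw [hB, map_add, map_add, map_add, map_smul, map_smul, A.G_U, hGV,
      smul_zero, smul_zero, add_zero, add_zero]
  -- take the normal part of G (G N) = -N
  have hsplit : A.G (A.G N) = A.G (S.tp (A.G N)) + A.G (S.np (A.G N)) := by
    rw [← map_add, S.tp_add_np]
  have hC2 : S.np (A.G (S.np (A.G N))) = -N - A.G K₂ := by
    have h := congrArg S.np hG2N
    rw [hsplit, map_add, hGtp, map_add, hnpGK₁, hnpGK₂, zero_add, map_neg, hN] at h
    linear_combination (norm := module) h
  -- G (G K₂) = -K₂ is tangent
  have hG2K₂ : A.G (A.G K₂) = -K₂ := by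
    rw [A.G_sq, A.u_eq, A.v_eq, hK₂.1.2.1, hK₂.1.2.2, zero_smul, zero_smul,
      add_zero, add_zero]
  have hnpK₂ : S.np K₂ = 0 := by rw [← hK₂.1.1, S.np_tp]
  show S.np (A.G (S.np (A.G (S.np (A.G N))))) + S.np (A.G N) = 0
  rw [hC2, map_sub, map_neg, map_sub, map_neg, hG2K₂, map_neg, hnpK₂, neg_zero,
    sub_zero]
  abel

end
end

section
/- For every vector field K in the anti-invariant distribution D⊥ of a semi-invariant submanifold M, one has h(K,U) = -QK, h(K,V) = -QJK, ∇_K U = σ(K)V, and ∇_K V = -σ(K)U. -/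
section

variable {F X : Type*} [CommRing F] [AddCommGroup X] [Module F X]

/-- for every `K` in the anti-invariant distribution `D⊥`:
`h(K,U) = -QK`, `h(K,V) = -QJK`, `∇_K U = σ(K)V`, `∇_K V = -σ(K)U`. -/
theorem statement7 (A : NCCMM F X) (S : SubmanifoldData F X A)
    (hSI : S.SemiInvariant) (K : X) (hK : S.Danti K) :
    S.sff K A.U = - S.Q K ∧ S.sff K A.V = - S.Q (A.J K) ∧
    S.conn K A.U = A.σ K • A.V ∧ S.conn K A.V = - A.σ K • A.U := by
  obtain ⟨⟨hKt, _, _⟩, hP⟩ := hK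
  obtain ⟨hGn, hHn⟩ := hSI.2.2.2 K ⟨⟨hKt, by assumption, by assumption⟩, hP⟩
  have hnpU : S.np A.U = 0 := by
    have h := S.tp_add_np A.U; rw [S.U_tang] at h
    have := congrArg (fun x => x - A.U) h; simpa [add_sub_cancel_left] using this
  have hnpV : S.np A.V = 0 := by
    have h := S.tp_add_np A.V; rw [S.V_tang] at h
    have := congrArg (fun x => x - A.V) h; simpa [add_sub_cancel_left] using this
  have htpH : S.tp (A.H K) = 0 := by rw [← hHn, S.tp_np]
  refine ⟨?_, ?_, ?_, ?_⟩
  · simp [SubmanifoldData.sff, SubmanifoldData.Q, A.nabla_U, hnpV]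
  · simp [SubmanifoldData.sff, SubmanifoldData.Q, A.nabla_V, hnpU, ← A.H_eq]
  · simp [SubmanifoldData.conn, A.nabla_U, hP, S.V_tang,
      show S.tp (A.G K) = 0 from hP]
  · simp [SubmanifoldData.conn, A.nabla_V, htpH, S.U_tang]

end
end

section
/- For all vector fields K, L in the anti-invariant distribution D⊥ of a semi-invariant submanifold M, the Lie bracket [K,L] lies in D ⊕ D⊥; equivalently, ḡ([K,L], U) = ḡ([K,L], V) = 0. -/
section

variable {F X : Type*} [CommRing F] [AddCommGroup X] [Module F X]

/-- for `K, L ∈ D⊥`, the bracket `[K,L]` lies in `D ⊕ D⊥`;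
equivalently `ḡ([K,L],U) = ḡ([K,L],V) = 0`. -/
theorem statement10 (A : NCCMM F X) (S : SubmanifoldData F X A)
    (hSI : S.SemiInvariant) (K L : X) (hK : S.Danti K) (hL : S.Danti L) :
    A.g (A.lie K L) A.U = 0 ∧ A.g (A.lie K L) A.V = 0 := by
  obtain ⟨⟨hKt, hKU, hKV⟩, hKp⟩ := hK
  obtain ⟨⟨hLt, hLU, hLV⟩, hLp⟩ := hL
  obtain ⟨hGK, hHK⟩ := hSI.2.2.2 K ⟨⟨hKt, hKU, hKV⟩, hKp⟩
  obtain ⟨hGL, hHL⟩ := hSI.2.2.2 L ⟨⟨hLt, hLU, hLV⟩, hLp⟩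
  -- the connection of the zero vector field vanishes
  have hn0 : ∀ M : X, A.nabla M 0 = 0 := by
    intro M
    have h := A.nabla_add₂ M 0 0
    rw [add_zero] at h
    exact right_eq_add.mp h
  -- derivatives of the zero function vanish
  have act0 : ∀ M : X, A.act M 0 = 0 := by
    intro M
    have h := A.metric_compat M 0 0
    simpa [hn0 M] using h
  -- tangent vectors are orthogonal to normal vectors
  have horth : ∀ M N : X, S.tp M = M → S.np N = N → A.g M N = 0 := by
    intro M N hM hN
    have := S.g_tp_np M N
    rwa [hM, hN] at this
  -- key computation: if g N W = 0 and g N (∇_M W) = 0 then g (∇_M N) W = 0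
  have main : ∀ M N W : X, A.g N W = 0 → A.g N (A.nabla M W) = 0 →
      A.g (A.nabla M N) W = 0 := by
    intro M N W h1 h2
    have hc := A.metric_compat M N W
    rw [h1, act0 M, h2, add_zero] at hc
    exact hc.symm
  -- g N (∇_M U) = 0 and g N (∇_M V) = 0 for suitable N, M
  have hU : ∀ M N : X, S.tp N = N → S.np (A.G M) = A.G M → A.g N A.V = 0 →
      A.g N (A.nabla M A.U) = 0 := by
    intro M N hN hGM hNV
    rw [A.nabla_U M]
    simp [horth N (A.G M) hN hGM, hNV]
  have hV : ∀ M N : X, S.tp N = N → S.np (A.H M) = A.H M → A.g N A.U = 0 →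
      A.g N (A.nabla M A.V) = 0 := by
    intro M N hN hHM hNU
    rw [A.nabla_V M]
    simp [horth N (A.H M) hN hHM, hNU]
  have hbr : ∀ W : X, A.g (A.nabla K L) W = 0 → A.g (A.nabla L K) W = 0 →
      A.g (A.lie K L) W = 0 := by
    intro W h1 h2
    rw [← A.torsion_free K L]
    simp [h1, h2]
  constructor
  · exact hbr A.U (main K L A.U hLU (hU K L hLt hGK hLV))
      (main L K A.U hKU (hU L K hKt hGL hKV))
  · exact hbr A.V (main K L A.V hLV (hV K L hLt hHK hLU))
      (main L K A.V hKV (hV L K hKt hHL hKU))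

end
end

section
/- If a semi-invariant submanifold M of a normal complex contact metric manifold is totally umbilical, then M is an invariant submanifold; that is, D⊥ = 0. -/
section

variable {F X : Type*} [CommRing F] [AddCommGroup X] [Module F X]

/-- a totally umbilical semi-invariant submanifold `M` is an
invariant submanifold, i.e. `D⊥ = 0`. -/
theorem statement18 (A : NCCMM F X) (S : SubmanifoldData F X A)
    (hSI : S.SemiInvariant) (hTU : S.TotallyUmbilical) :
    ∀ K : X, S.Danti K → K = 0 := by
  rintro K ⟨⟨hK, hKU, hKV⟩, hPK⟩
  obtain ⟨μ, hμ, humb⟩ := hTU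
  -- np V = 0 since V is tangent
  have hnpV : S.np A.V = 0 := by
    have := S.tp_add_np A.V
    rw [S.V_tang] at this
    linear_combination (norm := abel) this
  -- G K is normal
  have hGK : S.np (A.G K) = A.G K := by
    have := S.tp_add_np (A.G K)
    have hP : S.tp (A.G K) = 0 := hPK
    rw [hP, zero_add] at this
    exact this
  -- sff K U = - G K
  have hsff : S.sff K A.U = - A.G K := by
    unfold SubmanifoldData.sff
    rw [A.nabla_U K]
    rw [map_add, map_neg, map_smul, hnpV, smul_zero, add_zero, hGK]
  -- umbilicity: sff K U = g K U • μ = 0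
  have h0 : S.sff K A.U = 0 := by
    rw [humb K A.U hK S.U_tang]
    rw [show A.g K A.U = 0 from hKU, zero_smul]
  have hGK0 : A.G K = 0 := by
    have := hsff.symm.trans h0
    simpa [neg_eq_zero] using this
  -- apply G_sq
  have := A.G_sq K
  rw [hGK0, map_zero] at this
  rw [A.u_eq, A.v_eq, hKU, hKV, zero_smul, zero_smul, add_zero, add_zero] at this
  exact neg_eq_zero.mp this.symm


end
end

section
/- There does not exist a totally umbilical proper semi-invariant submanifold of a normal complex contact metric manifold; that is, if M is a semi-invariant submanifold that is totally umbilical, then M cannot satisfy both dim D ≠ 0 and dim D⊥ ≠ 0. -/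
section

variable {F X : Type*} [CommRing F] [AddCommGroup X] [Module F X]

/-- there is no totally umbilical proper semi-invariant
submanifold of a normal complex contact metric manifold: if `M` is
semi-invariant and totally umbilical, then `D` and `D⊥` cannot both be
nonzero. -/
theorem statement19 (A : NCCMM F X) (S : SubmanifoldData F X A)
    (hSI : S.SemiInvariant) (hTU : S.TotallyUmbilical) :
    ¬ ((∃ K : X, S.Dinv K ∧ K ≠ 0) ∧ (∃ K : X, S.Danti K ∧ K ≠ 0)) := by
  rintro ⟨-, ⟨Z, ⟨⟨⟨hZt, hZU, hZV⟩, hZP⟩, hZne⟩⟩⟩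
  obtain ⟨μ, -, humb⟩ := hTU
  -- np V = 0 and np U = 0
  have hnpV : S.np A.V = 0 := by
    have := S.np_tp A.V; rwa [S.V_tang] at this
  -- G Z is normal
  have hGnorm : S.np (A.G Z) = A.G Z :=
    (hSI.2.2.2 Z ⟨⟨hZt, hZU, hZV⟩, hZP⟩).1
  -- h(Z, U) = -G Z
  have hsff : S.sff Z A.U = - A.G Z := by
    unfold SubmanifoldData.sff
    rw [A.nabla_U Z, map_add, map_neg, hGnorm, map_smul, hnpV, smul_zero, add_zero]
  -- umbilical: h(Z, U) = g(Z,U) μ = 0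
  have humbZ : S.sff Z A.U = 0 := by
    rw [humb Z A.U hZt S.U_tang, hZU, zero_smul]
  have hGZ : A.G Z = 0 := by
    have := hsff.symm.trans humbZ
    rwa [neg_eq_zero] at this
  -- G² Z = -Z + u Z • U + v Z • V = -Z, but G(G Z) = 0
  have hsq := A.G_sq Z
  rw [hGZ, map_zero, A.u_eq, A.v_eq, hZU, hZV, zero_smul, zero_smul,
    add_zero, add_zero] at hsq
  exact hZne (neg_eq_zero.mp hsq.symm)

end
end
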